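/- Let W ∈ ℝ^{N×N} and let P be the orthogonal projector onto the range of a full-column-rank matrix U ∈ ℝ^{N×r}. Then lim_{k→∞} W^k = P if and only if the three conditions hold: (C1) W·P = P, (C2) P·W = P, and (C3) the spectral radius of W - P is strictly less than 1. -/

import Mathlib

open Matrix BigOperators

open Filter in
private lemma aux_isUnit {n : ℕ} (A : Matrix (Fin n) (Fin n) ℝ) (h : A.rank = n) :
    IsUnit A := by
  rw [Matrix.isUnit_iff_isUnit_det, isUnit_iff_ne_zero]
  intro hdet
  obtain ⟨v, hv, hAv⟩ := (Matrix.exists_mulVec_eq_zero_iff).mpr hdet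
  have hr : LinearMap.range A.mulVecLin = ⊤ := by
    apply Submodule.eq_top_of_finrank_eq
    have : Module.finrank ℝ (Fin n → ℝ) = n := Module.finrank_fin_fun ℝ
    rw [this]; exact h
  have hinj : Function.Injective A.mulVecLin :=
    (LinearMap.injective_iff_surjective).mpr (LinearMap.range_eq_top.mp hr)
  exact hv (hinj (show A.mulVecLin v = A.mulVecLin 0 by
    simp [Matrix.mulVecLin_apply, hAv]))

open Filter in
private lemma aux_pow_entries_tendsto_zero {n : ℕ} [NeZero n]
    (A : Matrix (Fin n) (Fin n) ℂ)
    (h : ∀ μ ∈ spectrum ℂ A, ‖μ‖ < 1) (i j : Fin n) :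
    Tendsto (fun k => (A ^ k) i j) atTop (nhds 0) := by
  letI := Matrix.linftyOpNormedRing (α := ℂ) (n := Fin n)
  letI := Matrix.linftyOpNormedAlgebra (α := ℂ) (n := Fin n) (R := ℂ)
  letI : CompleteSpace (Matrix (Fin n) (Fin n) ℂ) := FiniteDimensional.complete ℂ _
  haveI : Nonempty (Fin n) := ⟨⟨0, Nat.pos_of_ne_zero (NeZero.ne n)⟩⟩
  haveI : Nontrivial (Matrix (Fin n) (Fin n) ℂ) := by infer_instance
  have hρ : spectralRadius ℂ A < (1 : NNReal) := by
    apply spectrum.spectralRadius_lt_of_forall_lt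
    intro z hz
    have := h z hz
    exact_mod_cast this
  rw [ENNReal.coe_one] at hρ
  obtain ⟨c, hc1, hc2⟩ := ENNReal.lt_iff_exists_nnreal_btwn.mp hρ
  have hG := spectrum.pow_nnnorm_pow_one_div_tendsto_nhds_spectralRadius A
  have hev : ∀ᶠ k : ℕ in atTop, (‖A ^ k‖₊ : ENNReal) ^ (1 / (k:ℝ)) < c :=
    hG.eventually_lt_const hc1
  have hbound : ∀ᶠ k in atTop, ‖(A ^ k) i j‖ ≤ (c : ℝ) ^ k := by
    filter_upwards [hev, eventually_ge_atTop 1] with k hk hk1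
    have hkk : (‖A ^ k‖₊ : ENNReal) ≤ (c : ENNReal) ^ k := by
      have h1 : ((‖A ^ k‖₊ : ENNReal) ^ (1 / (k:ℝ))) ^ (k:ℝ) ≤ (c : ENNReal) ^ (k:ℝ) :=
        ENNReal.rpow_le_rpow hk.le (by positivity)
      rwa [← ENNReal.rpow_mul,
        one_div, inv_mul_cancel₀ (by exact_mod_cast Nat.one_le_iff_ne_zero.mp hk1 : (k:ℝ) ≠ 0),
        ENNReal.rpow_one, ENNReal.rpow_natCast] at h1
    have hnn : ‖A ^ k‖₊ ≤ c ^ k := by exact_mod_cast hkk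
    have hent : ‖(A ^ k) i j‖₊ ≤ ‖A ^ k‖₊ := by
      rw [Matrix.linfty_opNNNorm_def]
      refine le_trans ?_ (Finset.le_sup (f := fun i => ∑ j, ‖(A ^ k) i j‖₊) (Finset.mem_univ i))
      exact Finset.single_le_sum (f := fun j => ‖(A ^ k) i j‖₊) (fun _ _ => by positivity)
        (Finset.mem_univ j)
    calc ‖(A ^ k) i j‖ ≤ ‖A ^ k‖ := hent
      _ ≤ ((c : ℝ)) ^ k := by exact_mod_cast hnn
  exact squeeze_zero_norm' hbound
    (tendsto_pow_atTop_nhds_zero_of_lt_one c.2 (by exact_mod_cast hc2))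

open Filter in
private lemma aux_abs_lt_one {n : ℕ} {B : Matrix (Fin n) (Fin n) ℂ} {μ : ℂ}
    (hμ : μ ∈ spectrum ℂ B)
    (h0 : ∀ i j, Tendsto (fun k => (B ^ k) i j) atTop (nhds 0)) :
    ‖μ‖ < 1 := by
  rw [spectrum.mem_iff] at hμ
  have hdet : (algebraMap ℂ (Matrix (Fin n) (Fin n) ℂ) μ - B).det = 0 := by
    by_contra hne
    exact hμ ((Matrix.isUnit_iff_isUnit_det _).mpr (isUnit_iff_ne_zero.mpr hne))
  obtain ⟨v, hv, hBv⟩ := (Matrix.exists_mulVec_eq_zero_iff).mpr hdet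
  have hEig : B *ᵥ v = μ • v := by
    have : (algebraMap ℂ (Matrix (Fin n) (Fin n) ℂ) μ) *ᵥ v - B *ᵥ v = 0 := by
      rw [← Matrix.sub_mulVec]; exact hBv
    have h2 := sub_eq_zero.mp this
    rw [← h2, Algebra.algebraMap_eq_smul_one, Matrix.smul_mulVec, Matrix.one_mulVec]
  have hEigPow : ∀ k : ℕ, (B ^ k) *ᵥ v = μ ^ k • v := by
    intro k
    induction k with
    | zero => simp [Matrix.one_mulVec]
    | succ k ih =>
      rw [pow_succ', ← Matrix.mulVec_mulVec, ih, Matrix.mulVec_smul, hEig,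
        smul_smul, ← pow_succ]
  obtain ⟨i, hi⟩ := Function.ne_iff.mp hv
  have htends : Tendsto (fun k => ((B ^ k) *ᵥ v) i) atTop (nhds 0) := by
    have heq : ∀ k, ((B ^ k) *ᵥ v) i = ∑ j, (B ^ k) i j * v j := fun k => rfl
    simp only [heq]
    have : Tendsto (fun k => ∑ j, (B ^ k) i j * v j) atTop (nhds (∑ j : Fin n, 0 * v j)) :=
      tendsto_finset_sum _ (fun j _ => (h0 i j).mul tendsto_const_nhds)
    simpa using this
  have hμk : Tendsto (fun k => μ ^ k) atTop (nhds 0) := by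
    have h1 : Tendsto (fun k => μ ^ k * v i) atTop (nhds 0) := by
      have heq : ∀ k, ((B ^ k) *ᵥ v) i = μ ^ k * v i := fun k => by
        rw [hEigPow k]; rfl
      simpa only [heq] using htends
    have := h1.mul_const (v i)⁻¹
    simpa [mul_assoc, mul_inv_cancel₀ hi] using this
  by_contra hge
  push_neg at hge
  have h1le : ∀ k : ℕ, (1:ℝ) ≤ ‖μ ^ k‖ := by
    intro k; rw [norm_pow]; exact one_le_pow₀ hge
  have hn : Tendsto (fun k => ‖μ ^ k‖) atTop (nhds 0) := by
    simpa using hμk.norm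
  obtain ⟨k, hk⟩ := (hn.eventually_lt_const (by norm_num : (0:ℝ) < 1)).exists
  exact absurd hk (not_lt.mpr (h1le k))

private lemma aux_WkP {N : ℕ} {W P : Matrix (Fin N) (Fin N) ℝ} (hWP : W * P = P) (k : ℕ) :
    W ^ k * P = P := by
  induction k with
  | zero => simp
  | succ k ih => rw [pow_succ, Matrix.mul_assoc, hWP, ih]

private lemma aux_pow_sub {N : ℕ} {W P : Matrix (Fin N) (Fin N) ℝ} (hP2 : P * P = P)
    (hWP : W * P = P) (hPW : P * W = P) (k : ℕ) :
    (W - P) ^ (k + 1) = W ^ (k + 1) - P := by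
  induction k with
  | zero => simp
  | succ k ih =>
    rw [pow_succ, ih, sub_mul, mul_sub, mul_sub, ← pow_succ, aux_WkP hWP, hPW, hP2]
    abel

open Filter in
theorem projector_convergence_iff {N r : ℕ}
    (W : Matrix (Fin N) (Fin N) ℝ)
    (U : Matrix (Fin N) (Fin r) ℝ) (hU : U.rank = r) :
    Filter.Tendsto (fun k => W ^ k) Filter.atTop
        (nhds (U * (Uᵀ * U)⁻¹ * Uᵀ)) ↔
      (W * (U * (Uᵀ * U)⁻¹ * Uᵀ) = U * (Uᵀ * U)⁻¹ * Uᵀ ∧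
        (U * (Uᵀ * U)⁻¹ * Uᵀ) * W = U * (Uᵀ * U)⁻¹ * Uᵀ ∧
        ∀ μ ∈ spectrum ℂ ((W - U * (Uᵀ * U)⁻¹ * Uᵀ).map Complex.ofReal),
          ‖μ‖ < 1) := by
  set P : Matrix (Fin N) (Fin N) ℝ := U * (Uᵀ * U)⁻¹ * Uᵀ with hPdef
  rcases Nat.eq_zero_or_pos N with hN | hN
  · subst hN
    haveI : Subsingleton (Matrix (Fin 0) (Fin 0) ℝ) :=
      ⟨fun a b => by ext i; exact i.elim0⟩
    constructor
    · intro _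
      refine ⟨Subsingleton.elim _ _, Subsingleton.elim _ _, fun μ hμ => ?_⟩
      rw [spectrum.mem_iff] at hμ
      haveI : Subsingleton (Matrix (Fin 0) (Fin 0) ℂ) :=
        ⟨fun a b => by ext i; exact i.elim0⟩
      exact absurd (isUnit_of_subsingleton _) hμ
    · intro _
      have : (fun k : ℕ => W ^ k) = fun _ => P := funext fun k => Subsingleton.elim _ _
      rw [this]; exact tendsto_const_nhds
  haveI : NeZero N := ⟨Nat.pos_iff_ne_zero.mp hN⟩
  have hUnit : IsUnit (Uᵀ * U) :=
    aux_isUnit _ (by rw [Matrix.rank_transpose_mul_self]; simpa using hU)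
  have hd : IsUnit (Uᵀ * U).det := (Matrix.isUnit_iff_isUnit_det _).mp hUnit
  have hinv : (Uᵀ * U)⁻¹ * (Uᵀ * U) = 1 := Matrix.nonsing_inv_mul _ hd
  have hP2 : P * P = P := by
    calc P * P = U * ((Uᵀ * U)⁻¹ * ((Uᵀ * U) * ((Uᵀ * U)⁻¹ * Uᵀ))) := by
          simp only [hPdef, Matrix.mul_assoc]
      _ = P := by rw [← Matrix.mul_assoc (Uᵀ * U)⁻¹, hinv, Matrix.one_mul]
                  simp only [hPdef, Matrix.mul_assoc]
  constructor
  · intro h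
    have hc : Tendsto (fun k => W ^ (k + 1)) atTop (nhds P) :=
      h.comp (tendsto_add_atTop_nat 1)
    have h2 : Tendsto (fun k => W ^ (k + 1)) atTop (nhds (W * P)) := by
      simpa only [pow_succ'] using tendsto_const_nhds.mul h
    have hWP : W * P = P := tendsto_nhds_unique h2 hc
    have h3 : Tendsto (fun k => W ^ (k + 1)) atTop (nhds (P * W)) := by
      simpa only [pow_succ] using h.mul tendsto_const_nhds
    have hPW : P * W = P := tendsto_nhds_unique h3 hc
    refine ⟨hWP, hPW, fun μ hμ => ?_⟩
    have hij : ∀ i j, Tendsto (fun k => (W ^ k) i j) atTop (nhds (P i j)) := by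
      intro i j
      exact tendsto_pi_nhds.mp (tendsto_pi_nhds.mp h i) j
    have hije : ∀ i j, Tendsto (fun k => ((W - P) ^ k) i j) atTop (nhds 0) := by
      intro i j
      have h1 : Tendsto (fun k => (W ^ k) i j - P i j) atTop (nhds 0) := by
        simpa using (hij i j).sub (tendsto_const_nhds (x := P i j))
      refine h1.congr' ?_
      filter_upwards [eventually_ge_atTop 1] with k hk
      match k, hk with
      | (m + 1), _ =>
        rw [aux_pow_sub hP2 hWP hPW m]
        simp [Matrix.sub_apply]
    apply aux_abs_lt_one hμ
    intro i j
    have hmap : ∀ k : ℕ, ((W - P).map Complex.ofReal) ^ k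
        = ((W - P) ^ k).map Complex.ofReal := by
      intro k
      rw [show (W - P).map Complex.ofReal = Complex.ofRealHom.mapMatrix (W - P) from rfl,
        ← map_pow]
      rfl
    have heq : ∀ k : ℕ, (((W - P).map Complex.ofReal) ^ k) i j
        = Complex.ofReal (((W - P) ^ k) i j) := fun k => by rw [hmap k]; rfl
    simp only [heq]
    have := (Complex.continuous_ofReal.tendsto 0).comp (hije i j)
    simpa [Function.comp_def] using this
  · rintro ⟨hWP, hPW, hspec⟩
    have h0 := aux_pow_entries_tendsto_zero ((W - P).map Complex.ofReal) hspec
    have hmap : ∀ k : ℕ, ((W - P).map Complex.ofReal) ^ k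
        = ((W - P) ^ k).map Complex.ofReal := by
      intro k
      rw [show (W - P).map Complex.ofReal = Complex.ofRealHom.mapMatrix (W - P) from rfl,
        ← map_pow]
      rfl
    have hije : ∀ i j, Tendsto (fun k => ((W - P) ^ k) i j) atTop (nhds 0) := by
      intro i j
      have heq : ∀ k : ℕ, ((W - P) ^ k) i j
          = ((((W - P).map Complex.ofReal) ^ k) i j).re := fun k => by rw [hmap k]; rfl
      simp only [heq]
      have := (Complex.continuous_re.tendsto 0).comp (h0 i j)
      simpa [Function.comp_def] using this
    refine tendsto_pi_nhds.mpr fun i => tendsto_pi_nhds.mpr fun j => ?_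
    have h1 : Tendsto (fun k => ((W - P) ^ k) i j + P i j) atTop (nhds (P i j)) := by
      simpa using (hije i j).add (tendsto_const_nhds (x := P i j))
    refine h1.congr' ?_
    filter_upwards [eventually_ge_atTop 1] with k hk
    match k, hk with
    | (m + 1), _ =>
      rw [aux_pow_sub hP2 hWP hPW m]
      simp [Matrix.sub_apply]
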